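/- arXiv:1307.7491 — 2 statements merged into one kernel-verified Lean document; each statement's English description precedes it below -/
import Mathlib

section
/- Let H ∈ L¹((−1,1), M_{2r}(ℂ)) satisfy H(−x) = H(x)* a.e., and let 𝓦 be the unitary map of the previous statement. Let ℋ on L²((0,1), ℂ^{2r}) be the integral operator (ℋg)(x) = ∫₀¹ H(x−s) g(s) ds, and let ℱ_H on L²((0,1), ℂ^{4r}) be the integral operator with 2×2 block kernel F_H(x,t) = (1/2)·[[H((x−t)/2), H((x+t)/2)], [H(−(x+t)/2), H(−(x−t)/2)]]. Then ℱ_H = 𝓦 ℋ 𝓦⁻¹. -/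
open MeasureTheory Matrix

section Helpers

variable {α : Type*} [MeasurableSpace α] {μ : Measure α}

lemma helper_integrable_pi {ι : Type*} [Fintype ι] {f : α → ι → ℂ}
    (hm : AEStronglyMeasurable f μ) (h : ∀ i, Integrable (fun a => f a i) μ) :
    Integrable f μ := by
  refine Integrable.mono' (g := fun a => ∑ i, ‖f a i‖)
    (integrable_finset_sum _ fun i _ => (h i).norm) hm ?_
  filter_upwards with a
  refine (pi_norm_le_iff_of_nonneg (by positivity)).2 fun i => ?_
  exact Finset.single_le_sum (fun j _ => norm_nonneg _) (Finset.mem_univ i)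

lemma helper_integrable_eval {ι : Type*} [Fintype ι] {f : α → ι → ℂ}
    (hf : Integrable f μ) (i : ι) : Integrable (fun a => f a i) μ :=
  (ContinuousLinearMap.proj (R := ℂ) (φ := fun _ : ι => ℂ) i).integrable_comp hf

lemma helper_integral_sum_elim {ι κ : Type*} [Fintype ι] [Fintype κ]
    {f : α → ι → ℂ} {g : α → κ → ℂ}
    (hm : AEStronglyMeasurable (fun a => (Sum.elim (f a) (g a) : ι ⊕ κ → ℂ)) μ)
    (hf : Integrable f μ) (hg : Integrable g μ) :
    (∫ a, (Sum.elim (f a) (g a) : ι ⊕ κ → ℂ) ∂μ) = Sum.elim (∫ a, f a ∂μ) (∫ a, g a ∂μ) := by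
  have hint : Integrable (fun a => (Sum.elim (f a) (g a) : ι ⊕ κ → ℂ)) μ := by
    refine helper_integrable_pi hm ?_
    rintro (i | i)
    · simpa using helper_integrable_eval hf i
    · simpa using helper_integrable_eval hg i
  funext i
  have h1 := (ContinuousLinearMap.proj (R := ℂ) (φ := fun _ : ι ⊕ κ => ℂ) i).integral_comp_comm hint
  cases i with
  | inl j =>
      have h2 := (ContinuousLinearMap.proj (R := ℂ) (φ := fun _ : ι => ℂ) j).integral_comp_comm hf
      simp only [ContinuousLinearMap.proj_apply, Sum.elim_inl] at h1 h2 ⊢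
      rw [← h1, h2]
  | inr j =>
      have h2 := (ContinuousLinearMap.proj (R := ℂ) (φ := fun _ : κ => ℂ) j).integral_comp_comm hg
      simp only [ContinuousLinearMap.proj_apply, Sum.elim_inr] at h1 h2 ⊢
      rw [← h1, h2]

lemma helper_map_volume_affine {a : ℝ} (b : ℝ) (ha : a ≠ 0) :
    Measure.map (fun x => a * x + b) (volume : Measure ℝ)
      = ENNReal.ofReal |a⁻¹| • volume := by
  have h : (fun x : ℝ => a * x + b) = (fun x : ℝ => x + b) ∘ (fun x : ℝ => a * x) := rfl
  rw [h, ← Measure.map_map (measurable_add_const b) (measurable_const_mul a),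
    Real.map_volume_mul_left ha, Measure.map_smul, map_add_right_eq_self]

lemma helper_qmp_affine {a : ℝ} (b : ℝ) (ha : a ≠ 0) {s : Set ℝ} (hs : MeasurableSet s)
    (hmaps : Set.MapsTo (fun x => a * x + b) s s) :
    Measure.QuasiMeasurePreserving (fun x => a * x + b)
      (volume.restrict s) (volume.restrict s) := by
  have hTm : Measurable (fun x : ℝ => a * x + b) := (measurable_const_mul a).add_const b
  refine ⟨hTm, Measure.AbsolutelyContinuous.mk fun t ht h0 => ?_⟩
  rw [Measure.restrict_apply ht] at h0
  rw [Measure.map_apply hTm ht, Measure.restrict_apply (hTm ht)]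
  have hsub : (fun x => a * x + b) ⁻¹' t ∩ s ⊆ (fun x => a * x + b) ⁻¹' (t ∩ s) := by
    rintro x ⟨hxt, hxs⟩; exact ⟨hxt, hmaps hxs⟩
  refine le_antisymm (le_trans (measure_mono hsub) ?_) zero_le
  have hval : volume ((fun x => a * x + b) ⁻¹' (t ∩ s))
      = ENNReal.ofReal |a⁻¹| * volume (t ∩ s) := by
    rw [← Measure.map_apply hTm (ht.inter hs), helper_map_volume_affine b ha,
      Measure.smul_apply, smul_eq_mul]
  rw [hval, h0, mul_zero]

lemma helper_integrableOn_comp_affine {E : Type*} [NormedAddCommGroup E] {f : ℝ → E}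
    {a : ℝ} (b : ℝ) (ha : a ≠ 0) {s : Set ℝ} (hs : MeasurableSet s) :
    IntegrableOn (fun x => f (a * x + b)) ((fun x : ℝ => a * x + b) ⁻¹' s) volume
      ↔ IntegrableOn f s volume := by
  have hemb : MeasurableEmbedding (fun x : ℝ => a * x + b) :=
    (affineHomeomorph a b ha).measurableEmbedding
  have h1 : IntegrableOn f s volume
      ↔ Integrable f ((Measure.map (fun x : ℝ => a * x + b) volume).restrict s) := by
    rw [helper_map_volume_affine b ha, IntegrableOn, Measure.restrict_smul,
      integrable_smul_measure (ne_of_gt (ENNReal.ofReal_pos.2 (abs_pos.mpr (inv_ne_zero ha)))) ENNReal.ofReal_ne_top]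
  rw [h1, Measure.restrict_map hemb.measurable hs, hemb.integrable_map_iff]
  exact Iff.rfl

lemma helper_norm_mulVec_le {n : Type*} [Fintype n] (M : Matrix n n ℂ) (v : n → ℂ) :
    ‖M.mulVec v‖ ≤ (∑ i, ∑ j, ‖M i j‖) * ‖v‖ := by
  refine (pi_norm_le_iff_of_nonneg (by positivity)).2 fun i => ?_
  calc ‖M.mulVec v i‖ = ‖∑ j, M i j * v j‖ := by simp [Matrix.mulVec, dotProduct]
    _ ≤ ∑ j, ‖M i j * v j‖ := norm_sum_le _ _
    _ ≤ ∑ j, ‖M i j‖ * ‖v‖ := by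
        refine Finset.sum_le_sum fun j _ => ?_
        rw [norm_mul]
        exact mul_le_mul_of_nonneg_left (norm_le_pi_norm v j) (norm_nonneg _)
    _ = (∑ j, ‖M i j‖) * ‖v‖ := by rw [Finset.sum_mul]
    _ ≤ (∑ i, ∑ j, ‖M i j‖) * ‖v‖ := by
        refine mul_le_mul_of_nonneg_right ?_ (norm_nonneg _)
        exact Finset.single_le_sum
          (fun k _ => Finset.sum_nonneg fun j _ => norm_nonneg _) (Finset.mem_univ i)

lemma helper_int_shift_scalar {E : Type*} [NormedAddCommGroup E] {S : ℝ → E}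
    (hS : IntegrableOn S (Set.Ioo (-1:ℝ) 1)) (s : ℝ) :
    IntegrableOn (fun y => S (y - s)) (Set.Ioo (s-1) (s+1)) := by
  have h1 := (helper_integrableOn_comp_affine (f := S) (a := 1) (-s)
    one_ne_zero measurableSet_Ioo).2 hS
  have hset : ((fun y : ℝ => 1 * y + -s) ⁻¹' Set.Ioo (-1:ℝ) 1) = Set.Ioo (s-1) (s+1) := by
    ext z
    simp only [Set.mem_preimage, Set.mem_Ioo, one_mul]
    constructor <;> rintro ⟨u1, u2⟩ <;> constructor <;> linarith
  rw [hset] at h1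
  have hfun : (fun y : ℝ => S (1 * y + -s)) = fun y => S (y - s) := by
    funext y; congr 1; ring
  rwa [hfun] at h1

lemma helper_int_shift_scalar' {E : Type*} [NormedAddCommGroup E] {S : ℝ → E}
    (hS : IntegrableOn S (Set.Ioo (-1:ℝ) 1)) {s : ℝ} (hs0 : 0 ≤ s) (hs1 : s ≤ 1) :
    IntegrableOn (fun y => S (y - s)) (Set.Ioo (0:ℝ) 1) := by
  refine (helper_int_shift_scalar hS s).mono_set ?_
  intro z hz
  simp only [Set.mem_Ioo] at *
  constructor <;> linarith [hz.1, hz.2]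

lemma helper_shift_integral {E : Type*} [NormedAddCommGroup E] [NormedSpace ℝ E]
    (S : ℝ → E) (s : ℝ) :
    ∫ y in Set.Ioo (s-1) (s+1), S (y - s) = ∫ y in Set.Ioo (-1:ℝ) 1, S y := by
  calc ∫ y in Set.Ioo (s-1) (s+1), S (y - s)
      = ∫ y in (s-1)..(s+1), S (y - s) := by
        rw [intervalIntegral.integral_of_le (by linarith), integral_Ioc_eq_integral_Ioo]
    _ = ∫ y in (s-1-s)..(s+1-s), S y := intervalIntegral.integral_comp_sub_right (f := S) s
    _ = ∫ y in (-1:ℝ)..1, S y := by norm_num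
    _ = ∫ y in Set.Ioo (-1:ℝ) 1, S y := by
        rw [intervalIntegral.integral_of_le (by norm_num), integral_Ioc_eq_integral_Ioo]

lemma helper_cov_plus {E : Type*} [NormedAddCommGroup E] [NormedSpace ℝ E] (φ : ℝ → E) :
    ∫ t in Set.Ioo (0:ℝ) 1, φ (2⁻¹ * t + 2⁻¹) = (2:ℝ) • ∫ s in Set.Ioo (2⁻¹:ℝ) 1, φ s := by
  calc ∫ t in Set.Ioo (0:ℝ) 1, φ (2⁻¹ * t + 2⁻¹)
      = ∫ t in (0:ℝ)..1, φ (2⁻¹ * t + 2⁻¹) := by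
        rw [intervalIntegral.integral_of_le zero_le_one, integral_Ioc_eq_integral_Ioo]
    _ = ((2⁻¹:ℝ))⁻¹ • ∫ s in (2⁻¹*0+2⁻¹ : ℝ)..(2⁻¹*1+2⁻¹ : ℝ), φ s :=
        intervalIntegral.integral_comp_mul_add (f := φ) (by norm_num) 2⁻¹
    _ = (2:ℝ) • ∫ s in (2⁻¹:ℝ)..(1:ℝ), φ s := by norm_num
    _ = (2:ℝ) • ∫ s in Set.Ioo (2⁻¹:ℝ) 1, φ s := by
        rw [intervalIntegral.integral_of_le (by norm_num), integral_Ioc_eq_integral_Ioo]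

lemma helper_cov_minus {E : Type*} [NormedAddCommGroup E] [NormedSpace ℝ E] (φ : ℝ → E) :
    ∫ t in Set.Ioo (0:ℝ) 1, φ (-2⁻¹ * t + 2⁻¹) = (2:ℝ) • ∫ s in Set.Ioo (0:ℝ) 2⁻¹, φ s := by
  calc ∫ t in Set.Ioo (0:ℝ) 1, φ (-2⁻¹ * t + 2⁻¹)
      = ∫ t in (0:ℝ)..1, φ (-2⁻¹ * t + 2⁻¹) := by
        rw [intervalIntegral.integral_of_le zero_le_one, integral_Ioc_eq_integral_Ioo]
    _ = ((-2⁻¹:ℝ))⁻¹ • ∫ s in (-2⁻¹*0+2⁻¹ : ℝ)..(-2⁻¹*1+2⁻¹ : ℝ), φ s :=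
        intervalIntegral.integral_comp_mul_add (f := φ) (by norm_num) 2⁻¹
    _ = (-2:ℝ) • ∫ s in (2⁻¹:ℝ)..(0:ℝ), φ s := by norm_num
    _ = (-2:ℝ) • (-(∫ s in (0:ℝ)..(2⁻¹:ℝ), φ s)) := by
        rw [intervalIntegral.integral_symm]
    _ = (2:ℝ) • ∫ s in (0:ℝ)..(2⁻¹:ℝ), φ s := by rw [smul_neg, neg_smul, neg_neg]
    _ = (2:ℝ) • ∫ s in Set.Ioo (0:ℝ) 2⁻¹, φ s := by
        rw [intervalIntegral.integral_of_le (by norm_num), integral_Ioc_eq_integral_Ioo]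

lemma helper_glue {E : Type*} [NormedAddCommGroup E] [NormedSpace ℝ E] {φ : ℝ → E}
    (hφ : IntegrableOn φ (Set.Ioo (0:ℝ) 1)) :
    (∫ s in Set.Ioo (2⁻¹:ℝ) 1, φ s) + (∫ s in Set.Ioo (0:ℝ) 2⁻¹, φ s)
      = ∫ s in Set.Ioo (0:ℝ) 1, φ s := by
  have h1 : IntegrableOn φ (Set.Ioc (0:ℝ) 2⁻¹) :=
    hφ.mono_set (fun z hz => ⟨hz.1, lt_of_le_of_lt hz.2 (by norm_num)⟩)
  have h2 : IntegrableOn φ (Set.Ioc (2⁻¹:ℝ) 1) :=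
    (integrableOn_Ioc_iff_integrableOn_Ioo (f := φ) (b := 1)).2
      (hφ.mono_set (fun z hz => ⟨lt_trans (by norm_num) hz.1, hz.2⟩))
  rw [← integral_Ioc_eq_integral_Ioo, ← integral_Ioc_eq_integral_Ioo,
    ← integral_Ioc_eq_integral_Ioo,
    ← Set.Ioc_union_Ioc_eq_Ioc (by norm_num : (0:ℝ) ≤ 2⁻¹) (by norm_num : (2⁻¹:ℝ) ≤ 1),
    setIntegral_union (Set.Ioc_disjoint_Ioc_of_le le_rfl) measurableSet_Ioc h1 h2, add_comm]



lemma helper_meas_mulVec {n : ℕ} {H : ℝ → Matrix (Fin n) (Fin n) ℂ}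
    (hHmeas : ∀ i j, Measurable fun x => H x i j) {g' : ℝ → Fin n → ℂ} (hg' : Measurable g')
    (u v : ℝ → ℝ) (hu : Measurable u) (hv : Measurable v) (i : Fin n) :
    Measurable fun s => (H (u s)).mulVec (g' (v s)) i := by
  have h : (fun s => (H (u s)).mulVec (g' (v s)) i)
      = fun s => ∑ j, H (u s) i j * g' (v s) j := by
    funext s; simp [Matrix.mulVec, dotProduct]
  rw [h]
  exact Finset.measurable_sum _ fun j _ =>
    ((hHmeas i j).comp hu).mul ((measurable_pi_apply j).comp (hg'.comp hv))

lemma helper_int_shift {n : ℕ} (H : ℝ → Matrix (Fin n) (Fin n) ℂ)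
    (hHmeas : ∀ i j, Measurable fun x => H x i j)
    (hHint : ∀ i j, IntegrableOn (fun x => H x i j) (Set.Ioo (-1 : ℝ) 1))
    {s : ℝ} (hs0 : 0 ≤ s) (hs1 : s ≤ 1) (w : Fin n → ℂ) :
    IntegrableOn (fun y => (H (y - s)).mulVec w) (Set.Ioo (0 : ℝ) 1) := by
  have hmeas : Measurable fun y => (H (y - s)).mulVec w := by
    refine measurable_pi_lambda _ fun i => ?_
    have h : (fun y => (H (y - s)).mulVec w i) = fun y => ∑ j, H (y - s) i j * w j := by
      funext y; simp [Matrix.mulVec, dotProduct]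
    rw [h]
    exact Finset.measurable_sum _ fun j _ =>
      ((hHmeas i j).comp (measurable_id.sub_const s)).mul_const _
  refine helper_integrable_pi hmeas.aestronglyMeasurable fun i => ?_
  have h : (fun y => (H (y - s)).mulVec w i) = fun y => ∑ j, H (y - s) i j * w j := by
    funext y; simp [Matrix.mulVec, dotProduct]
  rw [h]
  refine integrable_finset_sum _ fun j _ => Integrable.mul_const ?_ _
  exact helper_int_shift_scalar' (hHint i j) hs0 hs1

lemma helper_master {n : ℕ} (H : ℝ → Matrix (Fin n) (Fin n) ℂ)
    (hHmeas : ∀ i j, Measurable fun x => H x i j)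
    (hHint : ∀ i j, IntegrableOn (fun x => H x i j) (Set.Ioo (-1 : ℝ) 1))
    (g' : ℝ → Fin n → ℂ) (hg'm : Measurable g')
    (hg'i : IntegrableOn g' (Set.Ioo (0:ℝ) 1)) :
    ∀ᵐ y ∂(volume.restrict (Set.Ioo (0:ℝ) 1)),
      IntegrableOn (fun s => (H (y - s)).mulVec (g' s)) (Set.Ioo (0:ℝ) 1) := by
  set μ := volume.restrict (Set.Ioo (0:ℝ) 1) with hμ
  set S : ℝ → ℝ := fun y => ∑ i, ∑ j, ‖H y i j‖ with hS
  have hSint : IntegrableOn S (Set.Ioo (-1:ℝ) 1) :=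
    integrable_finset_sum _ fun i _ => integrable_finset_sum _ fun j _ => (hHint i j).norm
  have hfm : Measurable (fun p : ℝ × ℝ => (H (p.2 - p.1)).mulVec (g' p.1)) := by
    refine measurable_pi_lambda _ fun i => ?_
    have h : (fun p : ℝ × ℝ => (H (p.2 - p.1)).mulVec (g' p.1) i)
        = fun p : ℝ × ℝ => ∑ j, H (p.2 - p.1) i j * g' p.1 j := by
      funext p; simp [Matrix.mulVec, dotProduct]
    rw [h]
    exact Finset.measurable_sum _ fun j _ =>
      ((hHmeas i j).comp (measurable_snd.sub measurable_fst)).mul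
        ((measurable_pi_apply j).comp (hg'm.comp measurable_fst))
  have key : Integrable (fun p : ℝ × ℝ => (H (p.2 - p.1)).mulVec (g' p.1)) (μ.prod μ) := by
    rw [integrable_prod_iff hfm.aestronglyMeasurable]
    constructor
    · filter_upwards [ae_restrict_mem measurableSet_Ioo] with s hs
      exact helper_int_shift H hHmeas hHint hs.1.le hs.2.le (g' s)
    · refine Integrable.mono' (g := fun s => (∫ y in Set.Ioo (-1:ℝ) 1, S y) * ‖g' s‖)
        (hg'i.norm.const_mul _) (hfm.aestronglyMeasurable.norm.integral_prod_right') ?_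
      filter_upwards [ae_restrict_mem measurableSet_Ioo] with s hs
      have hSshift : IntegrableOn (fun y => S (y - s)) (Set.Ioo (0:ℝ) 1) :=
        helper_int_shift_scalar' hSint hs.1.le hs.2.le
      have hb : ∀ y, ‖(H (y - s)).mulVec (g' s)‖ ≤ S (y - s) * ‖g' s‖ := fun y =>
        helper_norm_mulVec_le _ _
      rw [Real.norm_eq_abs, abs_of_nonneg (integral_nonneg fun y => norm_nonneg _)]
      calc ∫ y, ‖(H (y - s)).mulVec (g' s)‖ ∂μ
          ≤ ∫ y in Set.Ioo (0:ℝ) 1, S (y - s) * ‖g' s‖ :=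
            integral_mono_of_nonneg (Filter.Eventually.of_forall fun y => norm_nonneg _)
              (hSshift.mul_const _) (Filter.Eventually.of_forall hb)
        _ = (∫ y in Set.Ioo (0:ℝ) 1, S (y - s)) * ‖g' s‖ := integral_mul_const _ _
        _ ≤ (∫ y in Set.Ioo (-1:ℝ) 1, S y) * ‖g' s‖ := by
            refine mul_le_mul_of_nonneg_right ?_ (norm_nonneg _)
            have hmono : ∫ y in Set.Ioo (0:ℝ) 1, S (y - s)
                ≤ ∫ y in Set.Ioo (s-1) (s+1), S (y - s) := by
              refine setIntegral_mono_set (helper_int_shift_scalar hSint s)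
                (Filter.Eventually.of_forall fun y => ?_) ?_
              · positivity
              · refine Filter.Eventually.of_forall ?_
                intro z hz
                simp only [Set.mem_Ioo] at *
                constructor <;> linarith [hz.1, hz.2]
            calc ∫ y in Set.Ioo (0:ℝ) 1, S (y - s)
                ≤ ∫ y in Set.Ioo (s-1) (s+1), S (y - s) := hmono
              _ = ∫ y in Set.Ioo (-1:ℝ) 1, S y := helper_shift_integral S s
  exact key.prod_left_ae

end Helpers

/-- Conjugating the convolution operator `ℋ` with kernel `H(x−s)` by the unitary map
`𝓦` gives the integral operator `ℱ_H` with the 2×2 block kernel `F_H(x,t)`: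
`ℱ_H = 𝓦 ℋ 𝓦⁻¹`, stated pointwise a.e. as `ℱ_H(𝓦g) = 𝓦(ℋg)`. -/
theorem FH_conjugate_of_convolution (r : ℕ)
    (H : ℝ → Matrix (Fin (2 * r)) (Fin (2 * r)) ℂ)
    (hHmeas : ∀ i j, Measurable fun x => H x i j)
    (hHint : ∀ i j, IntegrableOn (fun x => H x i j) (Set.Ioo (-1 : ℝ) 1))
    (hHsym : ∀ᵐ x ∂(volume.restrict (Set.Ioo (-1 : ℝ) 1)), H (-x) = (H x)ᴴ)
    (g : ℝ → Fin (2 * r) → ℂ)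
    (hg : MemLp g 2 (volume.restrict (Set.Ioo (0 : ℝ) 1)))
    (Hg : ℝ → Fin (2 * r) → ℂ)
    (hHg : ∀ x, Hg x = ∫ s in Set.Ioo (0 : ℝ) 1, (H (x - s)).mulVec (g s))
    (Wg : ℝ → Fin (2 * r) ⊕ Fin (2 * r) → ℂ)
    (hWg : ∀ t, Wg t = Sum.elim
      (fun i => (Real.sqrt 2 : ℂ)⁻¹ * g ((1 + t) / 2) i)
      (fun i => (Real.sqrt 2 : ℂ)⁻¹ * g ((1 - t) / 2) i)) :
    ∀ᵐ x ∂(volume.restrict (Set.Ioo (0 : ℝ) 1)),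
      (∫ t in Set.Ioo (0 : ℝ) 1,
          ((1 / 2 : ℂ) • Matrix.fromBlocks
            (H ((x - t) / 2)) (H ((x + t) / 2))
            (H (-((x + t) / 2))) (H (-((x - t) / 2)))).mulVec (Wg t))
        = Sum.elim
            (fun i => (Real.sqrt 2 : ℂ)⁻¹ * Hg ((1 + x) / 2) i)
            (fun i => (Real.sqrt 2 : ℂ)⁻¹ * Hg ((1 - x) / 2) i) := by
  have hgm := hg.1
  set g' : ℝ → Fin (2 * r) → ℂ := hgm.mk g with hg'def
  have hg'sm : StronglyMeasurable g' := hgm.stronglyMeasurable_mk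
  have hg'm : Measurable g' := hg'sm.measurable
  have hgg' : g =ᵐ[volume.restrict (Set.Ioo (0:ℝ) 1)] g' := hgm.ae_eq_mk
  haveI : IsFiniteMeasure (volume.restrict (Set.Ioo (0:ℝ) 1)) := by
    constructor
    rw [Measure.restrict_apply_univ]
    simp [Real.volume_Ioo]
  have hg'i : IntegrableOn g' (Set.Ioo (0:ℝ) 1) :=
    MemLp.integrable (by norm_num) (hg.ae_eq hgg')
  have hmaster := helper_master H hHmeas hHint g' hg'm hg'i
  have hmapsP : Set.MapsTo (fun t : ℝ => 2⁻¹ * t + 2⁻¹) (Set.Ioo 0 1) (Set.Ioo 0 1) := by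
    intro t ht
    simp only [Set.mem_Ioo] at *
    constructor <;> linarith [ht.1, ht.2]
  have hmapsM : Set.MapsTo (fun t : ℝ => -2⁻¹ * t + 2⁻¹) (Set.Ioo 0 1) (Set.Ioo 0 1) := by
    intro t ht
    simp only [Set.mem_Ioo] at *
    constructor <;> linarith [ht.1, ht.2]
  have hqmpP := helper_qmp_affine (a := 2⁻¹) 2⁻¹ (by norm_num) measurableSet_Ioo hmapsP
  have hqmpM := helper_qmp_affine (a := -2⁻¹) 2⁻¹ (by norm_num) measurableSet_Ioo hmapsM
  have hiP := hqmpP.tendsto_ae.eventually hmaster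
  have hiM := hqmpM.tendsto_ae.eventually hmaster
  have hgP := hqmpP.tendsto_ae.eventually hgg'
  have hgM := hqmpM.tendsto_ae.eventually hgg'
  filter_upwards [ae_restrict_mem measurableSet_Ioo, hiP, hiM] with x hxI hiPx hiMx
  rw [show (2⁻¹ * x + 2⁻¹ : ℝ) = (1 + x) / 2 by ring] at hiPx
  rw [show (-2⁻¹ * x + 2⁻¹ : ℝ) = (1 - x) / 2 by ring] at hiMx
  set Gp : ℝ → Fin (2 * r) → ℂ := fun s => (H ((1 + x) / 2 - s)).mulVec (g' s) with hGp
  set Gm : ℝ → Fin (2 * r) → ℂ := fun s => (H ((1 - x) / 2 - s)).mulVec (g' s) with hGm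
  have hGpI : IntegrableOn Gp (Set.Ioo (0:ℝ) 1) := hiPx
  have hGmI : IntegrableOn Gm (Set.Ioo (0:ℝ) 1) := hiMx
  have hGp1 : IntegrableOn Gp (Set.Ioo (2⁻¹:ℝ) 1) :=
    hGpI.mono_set (fun z hz => ⟨lt_trans (by norm_num) hz.1, hz.2⟩)
  have hGp2 : IntegrableOn Gp (Set.Ioo (0:ℝ) 2⁻¹) :=
    hGpI.mono_set (fun z hz => ⟨hz.1, hz.2.trans (by norm_num)⟩)
  have hGm1 : IntegrableOn Gm (Set.Ioo (2⁻¹:ℝ) 1) :=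
    hGmI.mono_set (fun z hz => ⟨lt_trans (by norm_num) hz.1, hz.2⟩)
  have hGm2 : IntegrableOn Gm (Set.Ioo (0:ℝ) 2⁻¹) :=
    hGmI.mono_set (fun z hz => ⟨hz.1, hz.2.trans (by norm_num)⟩)
  have hsetP : ((fun t : ℝ => 2⁻¹ * t + 2⁻¹) ⁻¹' Set.Ioo (2⁻¹:ℝ) 1) = Set.Ioo 0 1 := by
    ext z
    simp only [Set.mem_preimage, Set.mem_Ioo]
    constructor <;> rintro ⟨u1, u2⟩ <;> constructor <;> linarith
  have hsetM : ((fun t : ℝ => -2⁻¹ * t + 2⁻¹) ⁻¹' Set.Ioo (0:ℝ) 2⁻¹) = Set.Ioo 0 1 := by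
    ext z
    simp only [Set.mem_preimage, Set.mem_Ioo]
    constructor <;> rintro ⟨u1, u2⟩ <;> constructor <;> linarith
  have hA : IntegrableOn (fun t => Gp (2⁻¹ * t + 2⁻¹)) (Set.Ioo (0:ℝ) 1) := by
    have h1 := (helper_integrableOn_comp_affine (f := Gp) (a := 2⁻¹) 2⁻¹ (by norm_num)
      measurableSet_Ioo).2 hGp1
    rwa [hsetP] at h1
  have hB : IntegrableOn (fun t => Gp (-2⁻¹ * t + 2⁻¹)) (Set.Ioo (0:ℝ) 1) := by
    have h1 := (helper_integrableOn_comp_affine (f := Gp) (a := -2⁻¹) 2⁻¹ (by norm_num)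
      measurableSet_Ioo).2 hGp2
    rwa [hsetM] at h1
  have hC : IntegrableOn (fun t => Gm (2⁻¹ * t + 2⁻¹)) (Set.Ioo (0:ℝ) 1) := by
    have h1 := (helper_integrableOn_comp_affine (f := Gm) (a := 2⁻¹) 2⁻¹ (by norm_num)
      measurableSet_Ioo).2 hGm1
    rwa [hsetP] at h1
  have hD : IntegrableOn (fun t => Gm (-2⁻¹ * t + 2⁻¹)) (Set.Ioo (0:ℝ) 1) := by
    have h1 := (helper_integrableOn_comp_affine (f := Gm) (a := -2⁻¹) 2⁻¹ (by norm_num)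
      measurableSet_Ioo).2 hGm2
    rwa [hsetM] at h1
  set c : ℂ := (1 / 2 : ℂ) * (Real.sqrt 2 : ℂ)⁻¹ with hc
  have hcongr : (∫ t in Set.Ioo (0 : ℝ) 1,
        ((1 / 2 : ℂ) • Matrix.fromBlocks
          (H ((x - t) / 2)) (H ((x + t) / 2))
          (H (-((x + t) / 2))) (H (-((x - t) / 2)))).mulVec (Wg t))
      = ∫ t in Set.Ioo (0 : ℝ) 1,
        (Sum.elim (c • (Gp (2⁻¹ * t + 2⁻¹) + Gp (-2⁻¹ * t + 2⁻¹)))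
          (c • (Gm (2⁻¹ * t + 2⁻¹) + Gm (-2⁻¹ * t + 2⁻¹)))
            : Fin (2 * r) ⊕ Fin (2 * r) → ℂ) := by
    refine integral_congr_ae ?_
    filter_upwards [hgP, hgM] with t h1 h2
    rw [show (2⁻¹ * t + 2⁻¹ : ℝ) = (1 + t) / 2 by ring] at h1 ⊢
    rw [show (-2⁻¹ * t + 2⁻¹ : ℝ) = (1 - t) / 2 by ring] at h2 ⊢
    rw [hWg t]
    simp only [hGp, hGm]
    rw [show ((1 + x) / 2 - (1 + t) / 2 : ℝ) = (x - t) / 2 by ring,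
      show ((1 + x) / 2 - (1 - t) / 2 : ℝ) = (x + t) / 2 by ring,
      show ((1 - x) / 2 - (1 + t) / 2 : ℝ) = -((x + t) / 2) by ring,
      show ((1 - x) / 2 - (1 - t) / 2 : ℝ) = -((x - t) / 2) by ring,
      h1, h2]
    have hv : (Sum.elim (fun i => (Real.sqrt 2 : ℂ)⁻¹ * g' ((1 + t) / 2) i)
          (fun i => (Real.sqrt 2 : ℂ)⁻¹ * g' ((1 - t) / 2) i)
            : Fin (2 * r) ⊕ Fin (2 * r) → ℂ)
        = Sum.elim ((Real.sqrt 2 : ℂ)⁻¹ • g' ((1 + t) / 2))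
            ((Real.sqrt 2 : ℂ)⁻¹ • g' ((1 - t) / 2)) := rfl
    rw [hv, Matrix.smul_mulVec, Matrix.fromBlocks_mulVec]
    funext i
    cases i with
    | inl i =>
        simp only [Sum.elim_comp_inl, Sum.elim_comp_inr, Matrix.mulVec_smul,
          Pi.smul_apply, Pi.add_apply, Sum.elim_inl, smul_eq_mul, hc]
        ring
    | inr i =>
        simp only [Sum.elim_comp_inl, Sum.elim_comp_inr, Matrix.mulVec_smul,
          Pi.smul_apply, Pi.add_apply, Sum.elim_inr, smul_eq_mul, hc]
        ring
  rw [hcongr]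
  have hGpMeas : ∀ i, Measurable fun s => Gp s i := by
    intro i
    rw [hGp]
    exact helper_meas_mulVec hHmeas hg'm (fun s => (1 + x) / 2 - s) (fun s => s)
      (measurable_const.sub measurable_id) measurable_id i
  have hGmMeas : ∀ i, Measurable fun s => Gm s i := by
    intro i
    rw [hGm]
    exact helper_meas_mulVec hHmeas hg'm (fun s => (1 - x) / 2 - s) (fun s => s)
      (measurable_const.sub measurable_id) measurable_id i
  have hmeasAffP : Measurable (fun t : ℝ => 2⁻¹ * t + 2⁻¹) :=
    (measurable_const_mul _).add_const _
  have hmeasAffM : Measurable (fun t : ℝ => -2⁻¹ * t + 2⁻¹) :=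
    (measurable_const_mul _).add_const _
  have hmeasPhi : AEStronglyMeasurable (fun t =>
      (Sum.elim (c • (Gp (2⁻¹ * t + 2⁻¹) + Gp (-2⁻¹ * t + 2⁻¹)))
        (c • (Gm (2⁻¹ * t + 2⁻¹) + Gm (-2⁻¹ * t + 2⁻¹)))
          : Fin (2 * r) ⊕ Fin (2 * r) → ℂ)) (volume.restrict (Set.Ioo (0:ℝ) 1)) := by
    refine Measurable.aestronglyMeasurable (measurable_pi_lambda _ ?_)
    rintro (i | i)
    · simp only [Sum.elim_inl, Pi.smul_apply, Pi.add_apply, smul_eq_mul]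
      exact measurable_const.mul
        (((hGpMeas i).comp hmeasAffP).add ((hGpMeas i).comp hmeasAffM))
    · simp only [Sum.elim_inr, Pi.smul_apply, Pi.add_apply, smul_eq_mul]
      exact measurable_const.mul
        (((hGmMeas i).comp hmeasAffP).add ((hGmMeas i).comp hmeasAffM))
  have hTopInt : Integrable (fun t => c • (Gp (2⁻¹ * t + 2⁻¹) + Gp (-2⁻¹ * t + 2⁻¹)))
      (volume.restrict (Set.Ioo (0:ℝ) 1)) := (Integrable.add hA hB).smul c
  have hBotInt : Integrable (fun t => c • (Gm (2⁻¹ * t + 2⁻¹) + Gm (-2⁻¹ * t + 2⁻¹)))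
      (volume.restrict (Set.Ioo (0:ℝ) 1)) := (Integrable.add hC hD).smul c
  rw [helper_integral_sum_elim hmeasPhi hTopInt hBotInt]
  have hHgp : Hg ((1 + x) / 2) = ∫ s in Set.Ioo (0:ℝ) 1, Gp s := by
    rw [hHg]
    refine integral_congr_ae ?_
    filter_upwards [hgg'] with s hs
    simp only [hGp]
    rw [hs]
  have hHgm : Hg ((1 - x) / 2) = ∫ s in Set.Ioo (0:ℝ) 1, Gm s := by
    rw [hHg]
    refine integral_congr_ae ?_
    filter_upwards [hgg'] with s hs
    simp only [hGm]
    rw [hs]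
  have hTopEq : (∫ t in Set.Ioo (0:ℝ) 1, c • (Gp (2⁻¹ * t + 2⁻¹) + Gp (-2⁻¹ * t + 2⁻¹)))
      = fun i => (Real.sqrt 2 : ℂ)⁻¹ * Hg ((1 + x) / 2) i := by
    rw [integral_smul, integral_add hA hB, helper_cov_plus Gp, helper_cov_minus Gp,
      ← smul_add, helper_glue hGpI, hHgp]
    funext i
    simp only [Pi.smul_apply, smul_eq_mul, Complex.real_smul, hc]
    push_cast
    ring
  have hBotEq : (∫ t in Set.Ioo (0:ℝ) 1, c • (Gm (2⁻¹ * t + 2⁻¹) + Gm (-2⁻¹ * t + 2⁻¹)))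
      = fun i => (Real.sqrt 2 : ℂ)⁻¹ * Hg ((1 - x) / 2) i := by
    rw [integral_smul, integral_add hC hD, helper_cov_plus Gm, helper_cov_minus Gm,
      ← smul_add, helper_glue hGmI, hHgm]
    funext i
    simp only [Pi.smul_apply, smul_eq_mul, Complex.real_smul, hc]
    push_cast
    ring
  rw [hTopEq, hBotEq]
end

section
/- Let (λ_j)_{j∈ℤ} be a strictly increasing sequence of reals and (A_j)_{j∈ℤ} nonzero positive semidefinite matrices in M_{2r}(ℂ). For λ ∈ ℝ let Υ₀(λ) : ℂ^{2r} → L²((0,1), ℂ^{2r}) be given by [Υ₀(λ)c](x) = e^{2iλx} c. Suppose Σ_{j∈ℤ} Υ₀(λ_j) A_j Υ₀(λ_j)* = I + ℋ in the strong operator topology, where ℋ is a bounded operator with ker(I + ℋ) = {0}. Then the system of functions { e^{iλ_j t} v : j ∈ ℤ, v ∈ Ran A_j } is complete in L²((−1,1), ℂ^{2r}). -/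
open MeasureTheory ContinuousLinearMap ComplexOrder
open scoped InnerProductSpace

private lemma exp_norm_one' (z : ℂ) (hz : z.re = 0) : ‖Complex.exp z‖ = 1 := by
  rw [Complex.norm_exp, hz, Real.exp_zero]


private lemma conj_exp_eq' (z : ℂ) (hz : z.re = 0) :
    (starRingEnd ℂ) (Complex.exp z) = Complex.exp (-z) := by
  rw [← Complex.exp_conj]
  congr 1
  apply Complex.ext <;> simp [hz]

noncomputable instance (priority := 100) : IsFiniteMeasure (volume.restrict (Set.Ioo (0:ℝ) 1)) :=
  ⟨by rw [Measure.restrict_apply_univ]; simp [Real.volume_Ioo]⟩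

noncomputable instance (priority := 100) :
    IsFiniteMeasure (volume.restrict (Set.Ioo (-1:ℝ) 1)) :=
  ⟨by rw [Measure.restrict_apply_univ]; simp [Real.volume_Ioo]⟩

private lemma map_phi' : Measure.map (fun x : ℝ => 2*x - 1) (volume.restrict (Set.Ioo (0:ℝ) 1))
    = ENNReal.ofReal 2⁻¹ • volume.restrict (Set.Ioo (-1:ℝ) 1) := by
  have hφ : Measurable (fun x : ℝ => 2*x - 1) := by fun_prop
  have hpre : (fun x : ℝ => 2*x - 1) ⁻¹' (Set.Ioo (-1:ℝ) 1) = Set.Ioo (0:ℝ) 1 := by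
    ext x; simp only [Set.mem_preimage, Set.mem_Ioo]
    constructor <;> rintro ⟨h1, h2⟩ <;> constructor <;> linarith
  rw [← hpre, ← MeasureTheory.Measure.restrict_map hφ measurableSet_Ioo]
  have h2 : (fun x : ℝ => 2*x - 1) = (fun y : ℝ => y + (-1)) ∘ (fun x : ℝ => 2*x) := by
    funext x; simp [sub_eq_add_neg]
  rw [h2, ← Measure.map_map (by fun_prop) (by fun_prop),
    Real.map_volume_mul_left (two_ne_zero), Measure.map_smul]
  rw [map_add_right_eq_self volume (-1), Measure.restrict_smul]
  rw [abs_of_nonneg]; norm_num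

private lemma adjoint_formula' (n : ℕ) (lam : ℝ)
    (T : EuclideanSpace ℂ (Fin n) →L[ℂ]
      Lp (EuclideanSpace ℂ (Fin n)) 2 (volume.restrict (Set.Ioo (0:ℝ) 1)))
    (hT : ∀ c, ∀ᵐ x ∂(volume.restrict (Set.Ioo (0:ℝ) 1)),
      (T c : ℝ → EuclideanSpace ℂ (Fin n)) x = Complex.exp (2*Complex.I*lam*x) • c)
    (f : Lp (EuclideanSpace ℂ (Fin n)) 2 (volume.restrict (Set.Ioo (0:ℝ) 1))) :
    ContinuousLinearMap.adjoint T f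
      = ∫ x, Complex.exp (-(2*Complex.I*lam*x)) • (f : ℝ → EuclideanSpace ℂ (Fin n)) x
          ∂(volume.restrict (Set.Ioo (0:ℝ) 1)) := by
  have hfi : Integrable (f : ℝ → EuclideanSpace ℂ (Fin n)) (volume.restrict (Set.Ioo (0:ℝ) 1)) :=
    (Lp.memLp f).integrable one_le_two
  have hint : Integrable
      (fun x : ℝ => Complex.exp (-(2*Complex.I*lam*x)) • (f : ℝ → EuclideanSpace ℂ (Fin n)) x)
      (volume.restrict (Set.Ioo (0:ℝ) 1)) := by
    refine (hfi.norm.mono' ?_ ?_)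
    · exact ((Complex.continuous_exp.comp (by fun_prop)).aestronglyMeasurable).smul
        (Lp.aestronglyMeasurable f)
    · refine Filter.Eventually.of_forall fun x => ?_
      rw [norm_smul, exp_norm_one']
      · simp
      · simp [Complex.mul_re, Complex.mul_im]
  refine ext_inner_left ℂ fun v => ?_
  rw [adjoint_inner_right, ← integral_inner hint, L2.inner_def]
  refine integral_congr_ae ?_
  filter_upwards [hT v] with x hx
  rw [hx, inner_smul_left, inner_smul_right]
  congr 1
  rw [← Complex.exp_conj]
  congr 1
  simp [Complex.ext_iff, Complex.mul_re, Complex.mul_im]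

private lemma matrix_apply_eq_zero' (n : ℕ) (A : Matrix (Fin n) (Fin n) ℂ)
    (hA : A.IsHermitian) (c : EuclideanSpace ℂ (Fin n))
    (h : ∀ v ∈ LinearMap.range (Matrix.toEuclideanLin A), ⟪v, c⟫_ℂ = 0) :
    Matrix.toEuclideanLin A c = 0 := by
  refine ext_inner_left ℂ fun u => ?_
  rw [inner_zero_right]
  calc ⟪u, Matrix.toEuclideanLin A c⟫_ℂ
      = ⟪u, LinearMap.adjoint (Matrix.toEuclideanLin A) c⟫_ℂ := by
        rw [← Matrix.toEuclideanLin_conjTranspose_eq_adjoint, hA.eq]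
    _ = ⟪Matrix.toEuclideanLin A u, c⟫_ℂ := LinearMap.adjoint_inner_right _ _ _
    _ = 0 := h _ ⟨u, rfl⟩

set_option maxHeartbeats 2000000 in
/-- If `Σ_j Υ₀(λ_j) A_j Υ₀(λ_j)* = I + ℋ` strongly with `ker (I + ℋ) = {0}`, then the
system `{e^{iλ_j t} v : j ∈ ℤ, v ∈ Ran A_j}` is complete in `L²((−1,1), ℂ^{2r})`. -/
theorem completeness_of_exponential_system (r : ℕ)
    (lam : ℤ → ℝ) (hlam : StrictMono lam)
    (A : ℤ → Matrix (Fin (2 * r)) (Fin (2 * r)) ℂ)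
    (hAne : ∀ j, A j ≠ 0) (hApsd : ∀ j, (A j).PosSemidef)
    (T : ℤ → (EuclideanSpace ℂ (Fin (2 * r)) →L[ℂ]
      Lp (EuclideanSpace ℂ (Fin (2 * r))) 2 (volume.restrict (Set.Ioo (0 : ℝ) 1))))
    (hT : ∀ j c, ∀ᵐ x ∂(volume.restrict (Set.Ioo (0 : ℝ) 1)),
      (T j c : ℝ → EuclideanSpace ℂ (Fin (2 * r))) x
        = Complex.exp (2 * Complex.I * (lam j : ℂ) * (x : ℂ)) • c)
    (ℋ : Lp (EuclideanSpace ℂ (Fin (2 * r))) 2 (volume.restrict (Set.Ioo (0 : ℝ) 1)) →L[ℂ]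
      Lp (EuclideanSpace ℂ (Fin (2 * r))) 2 (volume.restrict (Set.Ioo (0 : ℝ) 1)))
    (hker : LinearMap.ker (1 + ℋ : _ →L[ℂ] _).toLinearMap = ⊥)
    (hsum : ∀ f, HasSum
      (fun j => T j (LinearMap.toContinuousLinearMap (Matrix.toEuclideanLin (A j))
        (ContinuousLinearMap.adjoint (T j) f)))
      (f + ℋ f)) :
    (Submodule.span ℂ
      {f : Lp (EuclideanSpace ℂ (Fin (2 * r))) 2 (volume.restrict (Set.Ioo (-1 : ℝ) 1)) |
        ∃ j : ℤ, ∃ v : EuclideanSpace ℂ (Fin (2 * r)),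
          v ∈ LinearMap.range (Matrix.toEuclideanLin (A j)) ∧
          ∀ᵐ t ∂(volume.restrict (Set.Ioo (-1 : ℝ) 1)),
            (f : ℝ → EuclideanSpace ℂ (Fin (2 * r))) t
              = Complex.exp (Complex.I * (lam j : ℂ) * (t : ℂ)) • v}).topologicalClosure
      = ⊤ := by
  rw [Submodule.topologicalClosure_eq_top_iff, Submodule.eq_bot_iff]
  intro g hg
  -- the moments of g
  set c : ℤ → EuclideanSpace ℂ (Fin (2 * r)) := fun j =>
    ∫ t, Complex.exp (-(Complex.I * (lam j : ℂ) * (t:ℂ))) • (g : ℝ → EuclideanSpace ℂ (Fin (2 * r))) t ∂(volume.restrict (Set.Ioo (-1:ℝ) 1)) with hc_def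
  have hgi : Integrable (g : ℝ → EuclideanSpace ℂ (Fin (2 * r))) (volume.restrict (Set.Ioo (-1:ℝ) 1)) := (Lp.memLp g).integrable one_le_two
  have hint : ∀ j : ℤ, Integrable
      (fun t : ℝ => Complex.exp (-(Complex.I * (lam j : ℂ) * (t:ℂ))) • (g : ℝ → EuclideanSpace ℂ (Fin (2 * r))) t) (volume.restrict (Set.Ioo (-1:ℝ) 1)) := by
    intro j
    refine (hgi.norm.mono' ?_ ?_)
    · exact ((Complex.continuous_exp.comp (by fun_prop)).aestronglyMeasurable).smul
        (Lp.aestronglyMeasurable g)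
    · refine Filter.Eventually.of_forall fun t => ?_
      rw [norm_smul, exp_norm_one']
      · simp
      · simp [Complex.mul_re, Complex.mul_im]
  -- orthogonality gives that the moments are annihilated by A j
  have hAc : ∀ j : ℤ, Matrix.toEuclideanLin (A j) (c j) = 0 := by
    intro j
    refine matrix_apply_eq_zero' _ _ (hApsd j).isHermitian _ fun v hv => ?_
    have hmem : MemLp (fun t : ℝ => Complex.exp (Complex.I * (lam j : ℂ) * (t:ℂ)) • v) 2 (volume.restrict (Set.Ioo (-1:ℝ) 1)) := by
      refine MemLp.of_bound ?_ ‖v‖ ?_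
      · exact ((Complex.continuous_exp.comp (by fun_prop)).aestronglyMeasurable).smul
          aestronglyMeasurable_const
      · refine Filter.Eventually.of_forall fun t => ?_
        rw [norm_smul, exp_norm_one']
        · simp
        · simp [Complex.mul_re, Complex.mul_im]
    have hGmem : hmem.toLp _ ∈ (Submodule.span ℂ
        {f : Lp (EuclideanSpace ℂ (Fin (2 * r))) 2 (volume.restrict (Set.Ioo (-1:ℝ) 1)) | ∃ j : ℤ, ∃ v : EuclideanSpace ℂ (Fin (2 * r)),
          v ∈ LinearMap.range (Matrix.toEuclideanLin (A j)) ∧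
          ∀ᵐ t ∂(volume.restrict (Set.Ioo (-1:ℝ) 1)), (f : ℝ → EuclideanSpace ℂ (Fin (2 * r))) t = Complex.exp (Complex.I * (lam j : ℂ) * (t:ℂ)) • v}) :=
      Submodule.subset_span ⟨j, v, hv, hmem.coeFn_toLp⟩
    have horth : ⟪hmem.toLp _, g⟫_ℂ = 0 := (Submodule.mem_orthogonal _ g).mp hg _ hGmem
    rw [L2.inner_def] at horth
    have heq : ∫ t, ⟪(hmem.toLp _ : ℝ → EuclideanSpace ℂ (Fin (2 * r))) t, (g : ℝ → EuclideanSpace ℂ (Fin (2 * r))) t⟫_ℂ ∂(volume.restrict (Set.Ioo (-1:ℝ) 1))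
        = ∫ t, ⟪v, Complex.exp (-(Complex.I * (lam j : ℂ) * (t:ℂ))) • (g : ℝ → EuclideanSpace ℂ (Fin (2 * r))) t⟫_ℂ ∂(volume.restrict (Set.Ioo (-1:ℝ) 1)) := by
      refine integral_congr_ae ?_
      filter_upwards [hmem.coeFn_toLp] with t ht
      rw [ht, inner_smul_left, inner_smul_right,
        conj_exp_eq' _ (by simp [Complex.mul_re, Complex.mul_im])]
    rw [heq, integral_inner (hint j)] at horth
    exact horth
  -- the transplanted function on (0,1)
  have hphi : Measurable (fun x : ℝ => 2*x - 1) := by fun_prop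
  have hMP : MeasurePreserving (fun x : ℝ => 2*x - 1) (volume.restrict (Set.Ioo (0:ℝ) 1)) (ENNReal.ofReal 2⁻¹ • (volume.restrict (Set.Ioo (-1:ℝ) 1))) :=
    ⟨hphi, map_phi'⟩
  have hmemf : MemLp (fun x : ℝ => (g : ℝ → EuclideanSpace ℂ (Fin (2 * r))) (2*x - 1)) 2 (volume.restrict (Set.Ioo (0:ℝ) 1)) := by
    have h1 : MemLp (g : ℝ → EuclideanSpace ℂ (Fin (2 * r))) 2 (ENNReal.ofReal 2⁻¹ • (volume.restrict (Set.Ioo (-1:ℝ) 1))) :=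
      (Lp.memLp g).smul_measure ENNReal.ofReal_ne_top
    exact h1.comp_measurePreserving hMP
  set f := hmemf.toLp _ with hf_def
  -- compute the adjoint applied to f
  have hWj : ∀ j : ℤ, ContinuousLinearMap.adjoint (T j) f
      = (2⁻¹:ℝ) • (Complex.exp (-(Complex.I * (lam j : ℂ))) • c j) := by
    intro j
    rw [adjoint_formula' _ (lam j) (T j) (hT j) f]
    have hfm : AEStronglyMeasurable
        (fun t : ℝ => Complex.exp (-(Complex.I * (lam j : ℂ) * ((t:ℂ)+1))) • (g : ℝ → EuclideanSpace ℂ (Fin (2 * r))) t)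
        (Measure.map (fun x : ℝ => 2*x - 1) (volume.restrict (Set.Ioo (0:ℝ) 1))) := by
      rw [map_phi']
      refine AEStronglyMeasurable.mono_ac Measure.smul_absolutelyContinuous ?_
      exact ((Complex.continuous_exp.comp (by fun_prop)).aestronglyMeasurable).smul
        (Lp.aestronglyMeasurable g)
    have h1 : ∫ x, Complex.exp (-(2*Complex.I*(lam j : ℂ)*(x:ℂ))) • (f : ℝ → EuclideanSpace ℂ (Fin (2 * r))) x ∂(volume.restrict (Set.Ioo (0:ℝ) 1))
        = ∫ x, (fun t : ℝ => Complex.exp (-(Complex.I * (lam j : ℂ) * ((t:ℂ)+1))) • (g : ℝ → EuclideanSpace ℂ (Fin (2 * r))) t)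
            ((fun x : ℝ => 2*x - 1) x) ∂(volume.restrict (Set.Ioo (0:ℝ) 1)) := by
      refine integral_congr_ae ?_
      filter_upwards [hmemf.coeFn_toLp] with x hx
      rw [hx]
      congr 2
      push_cast
      ring
    have h3 : ∫ x, (fun t : ℝ => Complex.exp (-(Complex.I * (lam j : ℂ) * ((t:ℂ)+1)))
          • (g : ℝ → EuclideanSpace ℂ (Fin (2 * r))) t) ((fun x : ℝ => 2*x - 1) x) ∂(volume.restrict (Set.Ioo (0:ℝ) 1))
        = ∫ t, Complex.exp (-(Complex.I * (lam j : ℂ) * ((t:ℂ)+1))) • (g : ℝ → EuclideanSpace ℂ (Fin (2 * r))) t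
            ∂(Measure.map (fun x : ℝ => 2*x - 1) (volume.restrict (Set.Ioo (0:ℝ) 1))) :=
      (integral_map hphi.aemeasurable hfm).symm
    rw [h1, h3, map_phi', integral_smul_measure]
    have h2 : ∫ t, Complex.exp (-(Complex.I * (lam j : ℂ) * ((t:ℂ)+1))) • (g : ℝ → EuclideanSpace ℂ (Fin (2 * r))) t ∂(volume.restrict (Set.Ioo (-1:ℝ) 1))
        = Complex.exp (-(Complex.I * (lam j : ℂ))) • c j := by
      rw [hc_def, ← integral_smul]
      refine integral_congr_ae (Filter.Eventually.of_forall fun t => ?_)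
      simp only [smul_smul, ← Complex.exp_add]
      congr 2
      ring
    rw [h2]
    congr 1
    rw [ENNReal.toReal_ofReal]; norm_num
  -- each summand vanishes
  have hz : ∀ j : ℤ, T j (LinearMap.toContinuousLinearMap (Matrix.toEuclideanLin (A j))
      (ContinuousLinearMap.adjoint (T j) f)) = 0 := by
    intro j
    rw [hWj j]
    have hzero : (LinearMap.toContinuousLinearMap (Matrix.toEuclideanLin (A j)))
        ((2⁻¹:ℝ) • (Complex.exp (-(Complex.I * (lam j : ℂ))) • c j)) = 0 := by
      rw [map_smul_of_tower, _root_.map_smul,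
        show (LinearMap.toContinuousLinearMap (Matrix.toEuclideanLin (A j))) (c j)
          = Matrix.toEuclideanLin (A j) (c j) from rfl, hAc j]
      simp
    rw [hzero, map_zero]
  -- conclude f = 0
  have hadd0 : f + ℋ f = 0 := by
    have h0 : HasSum (fun _ : ℤ => (0 : Lp (EuclideanSpace ℂ (Fin (2 * r))) 2 (volume.restrict (Set.Ioo (0:ℝ) 1)))) (f + ℋ f) := by
      simpa only [hz] using hsum f
    exact h0.unique hasSum_zero
  have hf0 : f = 0 := by
    have hm : f ∈ LinearMap.ker (1 + ℋ : _ →L[ℂ] _).toLinearMap := by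
      rw [LinearMap.mem_ker]
      simpa using hadd0
    rw [hker] at hm
    simpa using hm
  -- pull back to g = 0
  have hcomp0 : (fun x : ℝ => (g : ℝ → EuclideanSpace ℂ (Fin (2 * r))) (2*x - 1)) =ᵐ[(volume.restrict (Set.Ioo (0:ℝ) 1))] 0 := by
    have h1 : ⇑f =ᵐ[(volume.restrict (Set.Ioo (0:ℝ) 1))] 0 := by rw [hf0]; exact Lp.coeFn_zero (EuclideanSpace ℂ (Fin (2 * r))) 2 (volume.restrict (Set.Ioo (0:ℝ) 1))
    exact (hmemf.coeFn_toLp.symm.trans h1)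
  have hg0 : (g : ℝ → EuclideanSpace ℂ (Fin (2 * r))) =ᵐ[(volume.restrict (Set.Ioo (-1:ℝ) 1))] 0 := by
    have hgae : (g : ℝ → EuclideanSpace ℂ (Fin (2 * r))) =ᵐ[(volume.restrict (Set.Ioo (-1:ℝ) 1))] (Lp.aestronglyMeasurable g).mk _ :=
      (Lp.aestronglyMeasurable g).ae_eq_mk
    set gm := (Lp.aestronglyMeasurable g).mk _ with hgm_def
    have hQMP : Measure.QuasiMeasurePreserving (fun x : ℝ => 2*x - 1) (volume.restrict (Set.Ioo (0:ℝ) 1)) (volume.restrict (Set.Ioo (-1:ℝ) 1)) :=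
      ⟨hphi, by rw [map_phi']; exact Measure.smul_absolutelyContinuous⟩
    have hgmcomp : (fun x : ℝ => gm (2*x - 1)) =ᵐ[(volume.restrict (Set.Ioo (0:ℝ) 1))] 0 := by
      have h4 := hQMP.ae_eq_comp hgae
      exact (h4.symm.trans hcomp0)
    have hmeas : MeasurableSet {t : ℝ | gm t ≠ 0} := by
      have h5 : MeasurableSet {t : ℝ | gm t = 0} :=
        (Lp.aestronglyMeasurable g).stronglyMeasurable_mk.measurableSet_eq_fun
          stronglyMeasurable_const
      simpa only [Set.compl_setOf] using h5.compl
    have hnull0 : (volume.restrict (Set.Ioo (0:ℝ) 1)) ((fun x : ℝ => 2*x - 1) ⁻¹' {t : ℝ | gm t ≠ 0}) = 0 := by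
      have h : (volume.restrict (Set.Ioo (0:ℝ) 1)) {x : ℝ | ¬ gm (2*x - 1) = 0} = 0 := by
        have h2 := hgmcomp
        rw [Filter.EventuallyEq, ae_iff] at h2
        simpa using h2
      refine measure_mono_null (fun x hx => ?_) h
      simpa using hx
    have hnull1 : (volume.restrict (Set.Ioo (-1:ℝ) 1)) {t : ℝ | gm t ≠ 0} = 0 := by
      have h1 : (Measure.map (fun x : ℝ => 2*x - 1) (volume.restrict (Set.Ioo (0:ℝ) 1))) {t : ℝ | gm t ≠ 0} = 0 := by
        rw [Measure.map_apply hphi hmeas]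
        exact hnull0
      rw [map_phi', Measure.smul_apply, smul_eq_mul] at h1
      have h2 : (ENNReal.ofReal 2⁻¹) ≠ 0 := by
        simp [ENNReal.ofReal_eq_zero]
      exact (mul_eq_zero.mp h1).resolve_left h2
    have hgm0 : gm =ᵐ[(volume.restrict (Set.Ioo (-1:ℝ) 1))] 0 := by
      rw [Filter.EventuallyEq, ae_iff]
      simpa using hnull1
    exact hgae.trans hgm0
  have hgz : g = 0 := by
    rw [← Lp.eq_zero_iff_ae_eq_zero] at hg0
    exact hg0
  simpa using hgz
end
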